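/- Let M be a matroid on a type α and let f, g : α → (Fin n → ZMod 2) be two rank-preserving maps from M into the complete binary matroid of rank n, i.e., for every set S of elements of M, the dimension of the 𝔽₂-linear span of f(S) and the dimension of the 𝔽₂-linear span of g(S) both equal rank_M(S). Then there exists an 𝔽₂-linear automorphism A of (Fin n → ZMod 2) such that f(x) = A(g(x)) for every element x in the ground set of M. -/

import Mathlib

open Set

noncomputable def mRank {α : Type*} (M : Matroid α) (S : Set α) : ℕ∞ :=
  ⨆ I ∈ {I : Set α | M.Indep I ∧ I ⊆ S}, I.encard

noncomputable def spanRank (K : Type*) [Field K] {W : Type*} [AddCommGroup W] [Module K W]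
    (S : Set W) : ℕ :=
  Module.finrank K (Submodule.span K S)

lemma mem_span_iff_spanRank_insert {K : Type*} [Field K] {W : Type*} [AddCommGroup W] [Module K W]
    [FiniteDimensional K W] (s : Set W) (v : W) :
    v ∈ Submodule.span K s ↔
      Module.finrank K (Submodule.span K (insert v s)) = Module.finrank K (Submodule.span K s) := by
  constructor
  · intro h
    rw [Submodule.span_insert_eq_span h]
  · intro h
    have hle : Submodule.span K s ≤ Submodule.span K (insert v s) :=
      Submodule.span_mono (subset_insert _ _)
    have := Submodule.eq_of_le_of_finrank_le hle h.le
    rw [this]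
    exact Submodule.subset_span (mem_insert _ _)

lemma coeff_zero_iff {K V ι : Type*} [Field K] [AddCommGroup V] [Module K V] [Fintype ι]
    {v : ι → V} (hv : LinearIndependent K v) (c : ι → K) (i0 : ι) :
    c i0 = 0 ↔ (∑ i, c i • v i) ∈ Submodule.span K (v '' {i | i ≠ i0}) := by
  classical
  constructor
  · intro h
    apply Submodule.sum_mem
    intro i _
    by_cases hi : i = i0
    · subst hi; rw [h, zero_smul]; exact Submodule.zero_mem _
    · exact Submodule.smul_mem _ _ (Submodule.subset_span ⟨i, hi, rfl⟩)
  · intro h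
    rw [Finsupp.mem_span_image_iff_linearCombination] at h
    obtain ⟨l, hl, hsum⟩ := h
    have hsum' : ∑ i, l i • v i = ∑ i, c i • v i := by
      rw [← hsum, Finsupp.linearCombination_apply, Finsupp.sum_fintype]
      simp
    have hd : ∀ i ∈ Finset.univ, (c - (l : ι → K)) i = 0 := by
      apply linearIndependent_iff'.1 hv
      simp [Pi.sub_apply, sub_smul, Finset.sum_sub_distrib, hsum']
    have hci : c i0 = l i0 := by
      have := hd i0 (Finset.mem_univ _)
      simpa [sub_eq_zero] using this
    rw [hci]
    by_contra hne
    have : i0 ∈ l.support := Finsupp.mem_support_iff.2 hne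
    have := hl this
    simp at this

theorem stmt3 {α : Type*} (n : ℕ) (M : Matroid α) (f g : α → (Fin n → ZMod 2))
    (hf : ∀ S : Set α, S ⊆ M.E → (spanRank (ZMod 2) (f '' S) : ℕ∞) = mRank M S)
    (hg : ∀ S : Set α, S ⊆ M.E → (spanRank (ZMod 2) (g '' S) : ℕ∞) = mRank M S) :
    ∃ A : (Fin n → ZMod 2) ≃ₗ[ZMod 2] (Fin n → ZMod 2), ∀ x ∈ M.E, f x = A (g x) := by
  classical
  obtain ⟨B, hB⟩ := M.exists_isBase
  have hBE : B ⊆ M.E := hB.subset_ground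
  -- basic rank facts
  have hle_base : ∀ J, M.Indep J → J.encard ≤ B.encard := by
    intro J hJ
    obtain ⟨B', hB', hJB'⟩ := hJ.exists_isBase_superset
    exact le_of_le_of_eq (Set.encard_mono hJB') (hB'.encard_eq_encard_of_isBase hB)
  have hrank_indep : ∀ I, M.Indep I → mRank M I = I.encard := by
    intro I hI
    unfold mRank
    apply le_antisymm
    · exact iSup₂_le fun J hJ => Set.encard_mono hJ.2
    · exact le_iSup₂ (f := fun (J : Set α) (_ : J ∈ {J : Set α | M.Indep J ∧ J ⊆ I}) => J.encard)
        I ⟨hI, subset_rfl⟩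
  have hrank_ins : ∀ x, mRank M (insert x B) = B.encard := by
    intro x
    unfold mRank
    apply le_antisymm
    · exact iSup₂_le fun J hJ => hle_base J hJ.1
    · exact le_iSup₂ (f := fun (J : Set α)
          (_ : J ∈ {J : Set α | M.Indep J ∧ J ⊆ insert x B}) => J.encard)
        B ⟨hB.indep, subset_insert _ _⟩
  -- B is finite
  have hfB : (spanRank (ZMod 2) (f '' B) : ℕ∞) = B.encard := by
    rw [hf B hBE, hrank_indep B hB.indep]
  have hgB : (spanRank (ZMod 2) (g '' B) : ℕ∞) = B.encard := by
    rw [hg B hBE, hrank_indep B hB.indep]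
  have hBfin : B.Finite := Set.finite_of_encard_eq_coe hfB.symm
  haveI : Fintype ↥B := hBfin.fintype
  have hcardB : (Fintype.card ↥B : ℕ∞) = B.encard := by
    rw [Set.encard_eq_coe_toFinset_card, Set.toFinset_card]
  -- linear independence of the families
  have hliF : LinearIndependent (ZMod 2) (fun b : ↥B => f ↑b) := by
    rw [linearIndependent_iff_card_eq_finrank_span]
    have him : Set.range (fun b : ↥B => f ↑b) = f '' B := (Set.image_eq_range f B).symm
    rw [him]
    have : (Fintype.card ↥B : ℕ∞) = (spanRank (ZMod 2) (f '' B) : ℕ∞) := by rw [hcardB, hfB]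
    exact_mod_cast this
  have hliG : LinearIndependent (ZMod 2) (fun b : ↥B => g ↑b) := by
    rw [linearIndependent_iff_card_eq_finrank_span]
    have him : Set.range (fun b : ↥B => g ↑b) = g '' B := (Set.image_eq_range g B).symm
    rw [him]
    have : (Fintype.card ↥B : ℕ∞) = (spanRank (ZMod 2) (g '' B) : ℕ∞) := by rw [hcardB, hgB]
    exact_mod_cast this
  -- span membership transfers between f and g
  have key : ∀ T, T ⊆ M.E → ∀ x ∈ M.E,
      (f x ∈ Submodule.span (ZMod 2) (f '' T) ↔ g x ∈ Submodule.span (ZMod 2) (g '' T)) := by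
    intro T hT x hx
    have h1 : spanRank (ZMod 2) (f '' T) = spanRank (ZMod 2) (g '' T) := by
      have := (hf T hT).trans (hg T hT).symm
      exact_mod_cast this
    have h2 : spanRank (ZMod 2) (f '' insert x T) = spanRank (ZMod 2) (g '' insert x T) := by
      have hT' : insert x T ⊆ M.E := insert_subset hx hT
      have := (hf _ hT').trans (hg _ hT').symm
      exact_mod_cast this
    rw [mem_span_iff_spanRank_insert, mem_span_iff_spanRank_insert,
      ← Set.image_insert_eq, ← Set.image_insert_eq]
    show spanRank (ZMod 2) (f '' insert x T) = spanRank (ZMod 2) (f '' T) ↔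
      spanRank (ZMod 2) (g '' insert x T) = spanRank (ZMod 2) (g '' T)
    rw [h1, h2]
  -- every f x, x ∈ E, is in the span of f '' B
  have hmemF : ∀ x ∈ M.E, f x ∈ Submodule.span (ZMod 2) (f '' B) := by
    intro x hx
    have h1 : spanRank (ZMod 2) (f '' insert x B) = spanRank (ZMod 2) (f '' B) := by
      have e1 := hf _ (insert_subset hx hBE)
      rw [hrank_ins x] at e1
      have := e1.trans hfB.symm
      exact_mod_cast this
    rw [mem_span_iff_spanRank_insert, ← Set.image_insert_eq]
    exact h1
  have hmemG : ∀ x ∈ M.E, g x ∈ Submodule.span (ZMod 2) (g '' B) := fun x hx =>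
    (key B hBE x hx).mp (hmemF x hx)
  -- coefficient functions
  have hrepF : ∀ x ∈ M.E, ∃ c : ↥B → ZMod 2, ∑ b, c b • f ↑b = f x := by
    intro x hx
    have h := hmemF x hx
    rw [Set.image_eq_range f B] at h
    exact (Submodule.mem_span_range_iff_exists_fun (R := ZMod 2)).1 h
  have hrepG : ∀ x ∈ M.E, ∃ c : ↥B → ZMod 2, ∑ b, c b • g ↑b = g x := by
    intro x hx
    have h := hmemG x hx
    rw [Set.image_eq_range g B] at h
    exact (Submodule.mem_span_range_iff_exists_fun (R := ZMod 2)).1 h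
  -- image identities for punctured sets
  have himF : ∀ b0 : ↥B, (fun b : ↥B => f ↑b) '' {b | b ≠ b0} = f '' (B \ {(b0 : α)}) := by
    intro b0
    ext y
    simp only [Set.mem_image, Set.mem_setOf_eq, Set.mem_diff, Set.mem_singleton_iff]
    constructor
    · rintro ⟨⟨b, hbB⟩, hne, rfl⟩
      exact ⟨b, ⟨hbB, fun h => hne (Subtype.ext h)⟩, rfl⟩
    · rintro ⟨a, ⟨haB, hne⟩, rfl⟩
      exact ⟨⟨a, haB⟩, fun h => hne (congrArg Subtype.val h), rfl⟩
  have himG : ∀ b0 : ↥B, (fun b : ↥B => g ↑b) '' {b | b ≠ b0} = g '' (B \ {(b0 : α)}) := by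
    intro b0
    ext y
    simp only [Set.mem_image, Set.mem_setOf_eq, Set.mem_diff, Set.mem_singleton_iff]
    constructor
    · rintro ⟨⟨b, hbB⟩, hne, rfl⟩
      exact ⟨b, ⟨hbB, fun h => hne (Subtype.ext h)⟩, rfl⟩
    · rintro ⟨a, ⟨haB, hne⟩, rfl⟩
      exact ⟨⟨a, haB⟩, fun h => hne (congrArg Subtype.val h), rfl⟩
  -- the coefficients agree
  have hsame : ∀ x ∈ M.E, ∀ (cf cg : ↥B → ZMod 2),
      (∑ b, cf b • f ↑b = f x) → (∑ b, cg b • g ↑b = g x) → cf = cg := by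
    intro x hx cf cg hcf hcg
    funext b0
    have h1 : cf b0 = 0 ↔ cg b0 = 0 := by
      rw [coeff_zero_iff hliF cf b0, coeff_zero_iff hliG cg b0, hcf, hcg, himF, himG]
      exact key (B \ {(b0 : α)}) ((diff_subset).trans hBE) x hx
    have h2 : ∀ a b : ZMod 2, (a = 0 ↔ b = 0) → a = b := by decide
    exact h2 _ _ h1
  -- extend the images of B to bases of the whole space
  have hsF : LinearIndependent (ZMod 2) ((↑) : ↥(f '' B) → (Fin n → ZMod 2)) := by
    have h := hliF.linearIndepOn_id
    rwa [show Set.range (fun b : ↥B => f ↑b) = f '' B from (Set.image_eq_range f B).symm] at h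
  have hsG : LinearIndependent (ZMod 2) ((↑) : ↥(g '' B) → (Fin n → ZMod 2)) := by
    have h := hliG.linearIndepOn_id
    rwa [show Set.range (fun b : ↥B => g ↑b) = g '' B from (Set.image_eq_range g B).symm] at h
  set sF := LinearIndepOn.extend (show LinearIndepOn (ZMod 2) id (f '' B) from hsF) (subset_univ _) with hsFdef
  set sG := LinearIndepOn.extend (show LinearIndepOn (ZMod 2) id (g '' B) from hsG) (subset_univ _) with hsGdef
  let basF : Module.Basis ↥sF (ZMod 2) (Fin n → ZMod 2) := Module.Basis.extend hsF
  let basG : Module.Basis ↥sG (ZMod 2) (Fin n → ZMod 2) := Module.Basis.extend hsG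
  haveI : Fintype ↥sF := FiniteDimensional.fintypeBasisIndex basF
  haveI : Fintype ↥sG := FiniteDimensional.fintypeBasisIndex basG
  haveI : Fintype ↥(f '' B) := (hBfin.image f).fintype
  haveI : Fintype ↥(g '' B) := (hBfin.image g).fintype
  have hsub_f : f '' B ⊆ sF := LinearIndepOn.subset_extend (show LinearIndepOn (ZMod 2) id (f '' B) from hsF) _
  have hsub_g : g '' B ⊆ sG := LinearIndepOn.subset_extend (show LinearIndepOn (ZMod 2) id (g '' B) from hsG) _
  haveI : Fintype ↥(sF \ f '' B : Set (Fin n → ZMod 2)) := (sF.toFinite.diff).fintype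
  haveI : Fintype ↥(sG \ g '' B : Set (Fin n → ZMod 2)) := (sG.toFinite.diff).fintype
  have hinjF : Set.InjOn f B := by
    rw [Set.injOn_iff_injective]
    exact hliF.injective
  have hinjG : Set.InjOn g B := by
    rw [Set.injOn_iff_injective]
    exact hliG.injective
  let e1 : ↥B ≃ ↥(g '' B) := Equiv.Set.imageOfInjOn g B hinjG
  let e2 : ↥B ≃ ↥(f '' B) := Equiv.Set.imageOfInjOn f B hinjF
  let phi : ↥(g '' B) ≃ ↥(f '' B) := e1.symm.trans e2
  -- the complements have the same cardinality
  have hcards : Fintype.card ↥(sG \ g '' B : Set (Fin n → ZMod 2)) =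
      Fintype.card ↥(sF \ f '' B : Set (Fin n → ZMod 2)) := by
    have c1 : Fintype.card ↥sF = Fintype.card ↥sG := by
      rw [← Module.finrank_eq_card_basis basF, ← Module.finrank_eq_card_basis basG]
    have c2 : Fintype.card ↥(g '' B) = Fintype.card ↥(f '' B) := Fintype.card_congr phi
    have d1 : (sG \ (g '' B)).ncard = sG.ncard - (g '' B).ncard := Set.ncard_diff hsub_g
    have d2 : (sF \ (f '' B)).ncard = sF.ncard - (f '' B).ncard := Set.ncard_diff hsub_f
    have n1 : ∀ (s : Set (Fin n → ZMod 2)) [Fintype ↥s], s.ncard = Fintype.card ↥s := by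
      intro s _
      rw [← Nat.card_coe_set_eq, Nat.card_eq_fintype_card]
    rw [← n1, ← n1, d1, d2, n1 sF, n1 sG, n1 (f '' B), n1 (g '' B), c1, c2]
  obtain ⟨psi⟩ : Nonempty (↥(sG \ g '' B : Set (Fin n → ZMod 2)) ≃
      ↥(sF \ f '' B : Set (Fin n → ZMod 2))) := Fintype.card_eq.mp hcards
  let e : ↥sG ≃ ↥sF :=
    (Equiv.Set.sumDiffSubset hsub_g).symm.trans
      ((Equiv.sumCongr phi psi).trans (Equiv.Set.sumDiffSubset hsub_f))
  let A := basG.equiv basF e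
  refine ⟨A, ?_⟩
  -- A maps g b to f b for b in B
  have hAgb : ∀ b ∈ B, A (g b) = f b := by
    intro b hb
    have hgmem : g b ∈ g '' B := mem_image_of_mem g hb
    have hfmem : f b ∈ f '' B := mem_image_of_mem f hb
    have h1 : g b = basG ⟨g b, hsub_g hgmem⟩ :=
      (Module.Basis.extend_apply_self hsG ⟨g b, hsub_g hgmem⟩).symm
    have he : e ⟨g b, hsub_g hgmem⟩ = ⟨f b, hsub_f hfmem⟩ := by
      show (Equiv.Set.sumDiffSubset hsub_f)
        ((Equiv.sumCongr phi psi)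
          ((Equiv.Set.sumDiffSubset hsub_g).symm ⟨g b, hsub_g hgmem⟩)) = _
      rw [Equiv.Set.sumDiffSubset_symm_apply_of_mem _ hgmem]
      have hphi : phi ⟨g b, hgmem⟩ = ⟨f b, hfmem⟩ := by
        show e2 (e1.symm ⟨g b, hgmem⟩) = _
        have h11 : e1.symm ⟨g b, hgmem⟩ = ⟨b, hb⟩ := by
          rw [Equiv.symm_apply_eq]
          exact Subtype.ext rfl
        rw [h11]
        exact Subtype.ext rfl
      rw [Equiv.sumCongr_apply, Sum.map_inl, hphi,
        Equiv.Set.sumDiffSubset_apply_inl]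
    show A (g b) = f b
    rw [h1]
    show basG.equiv basF e (basG ⟨g b, hsub_g hgmem⟩) = f b
    rw [Module.Basis.equiv_apply, he]
    exact Module.Basis.extend_apply_self hsF ⟨f b, hsub_f hfmem⟩
  -- conclude
  intro x hx
  obtain ⟨cf, hcf⟩ := hrepF x hx
  obtain ⟨cg, hcg⟩ := hrepG x hx
  have hc : cf = cg := hsame x hx cf cg hcf hcg
  rw [← hcg, map_sum]
  simp_rw [map_smul]
  rw [← hcf, hc]
  apply Finset.sum_congr rfl
  intro b _
  rw [hAgb ↑b b.2]
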